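/- arXiv:1807.10313 — 4 statements merged into one kernel-verified Lean document; each statement's English description precedes it below -/
import Mathlib

section
/- Let p be a prime and d an integer with 1 < d < p and p ≡ -1 (mod d). Define τ_p(d) = Σ_{i=0}^{p-1} τ_p(d,i), where τ_p(d,i) is the number of positive integers n ≤ ⌊id/p⌋ such that −n ≡ m·d (mod p) for some integer m with 0 < m ≤ p−1−i. Then τ_p(d) = 0. -/
open scoped Classical in
/-- `tauP p d i` is the number of positive integers `n ≤ ⌊i·d/p⌋` such that
`-n ≡ m·d (mod p)` for some `m` with `0 < m ≤ p - 1 - i`. -/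
noncomputable def tauP (p d i : ℕ) : ℕ :=
  ((Finset.Icc 1 (i * d / p)).filter fun n =>
    ∃ m : ℕ, 0 < m ∧ m ≤ p - 1 - i ∧ (-(n : ZMod p) = ((m * d : ℕ) : ZMod p))).card

/-- `tauPSum p d = Σ_{i=0}^{p-1} tauP p d i`. -/
noncomputable def tauPSum (p d : ℕ) : ℕ := ∑ i ∈ Finset.range p, tauP p d i

/-- If `p` is prime, `1 < d < p` and `p ≡ -1 (mod d)`, then `τ_p(d) = 0`. -/
theorem tauPSum_eq_zero_of_neg_one_mod (p d : ℕ) (hp : p.Prime) (h1 : 1 < d)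
    (h2 : d < p) (hmod : (p : ZMod d) = -1) :
    tauPSum p d = 0 := by
  have hp0 : 0 < p := hp.pos
  unfold tauPSum
  refine Finset.sum_eq_zero ?_
  intro i hi
  rw [Finset.mem_range] at hi
  unfold tauP
  rw [Finset.card_eq_zero, Finset.eq_empty_iff_forall_notMem]
  intro x hx
  simp only [Finset.mem_filter, Finset.bind_def, Finset.mem_biUnion, Finset.mem_Icc,
    Finset.pure_def, Finset.mem_singleton, Finset.mem_sup] at hx
  obtain ⟨⟨n, ⟨hn1, hn2⟩, hxn⟩, m, hm1, hm2, heq⟩ := hx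
  subst hxn
  have hpd : p ∣ m * d + n := by
    have h0 : ((m * d + n : ℕ) : ZMod p) = 0 := by
      push_cast
      push_cast at heq
      linear_combination -heq
    exact (ZMod.natCast_eq_zero_iff _ _).mp h0
  obtain ⟨t, ht⟩ := hpd
  have ht1 : 1 ≤ t := by
    rcases Nat.eq_zero_or_pos t with h | h
    · rw [h, Nat.mul_zero] at ht; omega
    · exact h
  have hdd : d ∣ n + t := by
    have h0 : ((n + t : ℕ) : ZMod d) = 0 := by
      have hc := congrArg (fun x : ℕ => (x : ZMod d)) ht
      simp only [Nat.cast_add, Nat.cast_mul] at hc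
      rw [hmod] at hc
      push_cast
      linear_combination hc - (m : ZMod d) * ZMod.natCast_self d
    exact (ZMod.natCast_eq_zero_iff _ _).mp h0
  have hdnt : d ≤ n + t := Nat.le_of_dvd (by omega) hdd
  have hnp : n * p ≤ i * d := (Nat.le_div_iff_mul_le hp0).mp hn2
  have hmi : m + i + 1 ≤ p := by omega
  -- cast everything to ℤ and derive a contradiction
  have hN : (1 : ℤ) ≤ n := by exact_mod_cast hn1
  have hnp' : (n : ℤ) * p ≤ i * d := by exact_mod_cast hnp
  have hmi' : (m : ℤ) + i + 1 ≤ p := by exact_mod_cast hmi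
  have hdnt' : (d : ℤ) ≤ n + t := by exact_mod_cast hdnt
  have ht' : (m : ℤ) * d + n = p * t := by exact_mod_cast ht
  have hi' : (i : ℤ) < p := by exact_mod_cast hi
  have hd1 : (1 : ℤ) < d := by exact_mod_cast h1
  have ht1' : (1 : ℤ) ≤ t := by exact_mod_cast ht1
  have hm1' : (1 : ℤ) ≤ m := by exact_mod_cast hm1
  have hp1 : (1 : ℤ) ≤ p := by exact_mod_cast hp0
  nlinarith [mul_le_mul_of_nonneg_right hnp' (by linarith : (0:ℤ) ≤ p),
    mul_le_mul_of_nonneg_right hdnt' (by positivity : (0:ℤ) ≤ (p:ℤ)*p),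
    mul_le_mul_of_nonneg_right hmi' (by positivity : (0:ℤ) ≤ (d:ℤ)*p),
    mul_le_mul_of_nonneg_right hi' (by linarith : (0:ℤ) ≤ d)]
end

section
/- Let p be a prime and d an integer with 1 < d < p and p ≡ 1 (mod d). With τ_p(d) = Σ_{i=0}^{p-1} τ_p(d,i) as defined, one has τ_p(d) = ⌊(d-1)²/4⌋ · (p-1)/d. -/
/-- Auxiliary sum identity: `∑_{j<D} (D - (2j+1)) = ⌊D²/4⌋`. -/
lemma tauP_S_eq (D : ℕ) : ∑ j ∈ Finset.range D, (D - (2 * j + 1)) = D ^ 2 / 4 := by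
  induction D using Nat.twoStepInduction with
  | zero => simp
  | one => simp
  | more D ih _ =>
    rw [Finset.sum_range_succ']
    have h1 : ∀ j, (D + 2) - (2 * (j + 1) + 1) = D - (2 * j + 1) := by intro j; omega
    rw [Finset.sum_congr rfl fun j _ => h1 j, Finset.sum_range_succ, ih]
    have h2 : D - (2 * D + 1) = 0 := by omega
    have h3 : (D + 2) ^ 2 = D ^ 2 + (D + 1) * 4 := by ring
    rw [h2, h3, Nat.add_mul_div_right _ _ (by norm_num : (0:ℕ) < 4)]
    omega

open scoped Classical in
/-- Pointwise identification of `tauP` with a linear-inequality count. -/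
lemma tauP_eq_card (p d k : ℕ) (hp : p.Prime) (h1 : 1 < d) (h2 : d < p)
    (hk : p = k * d + 1) (hk1 : 1 ≤ k) (i : ℕ) (hi : i < p) :
    tauP p d i
      = ((Finset.Icc 1 (d - 1)).filter fun n => n * k + 1 ≤ i ∧ i + n * k ≤ p - 1).card := by
  haveI := Fact.mk hp
  have hkd : ((k * d : ℕ) : ZMod p) = -1 := by
    have h0 : ((k * d + 1 : ℕ) : ZMod p) = 0 := by rw [← hk]; exact ZMod.natCast_self p
    push_cast at h0 ⊢
    linear_combination h0
  have hdne : ((d : ℕ) : ZMod p) ≠ 0 := by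
    intro h0
    rw [ZMod.natCast_eq_zero_iff] at h0
    have := Nat.le_of_dvd (by omega) h0
    omega
  have hF : ∀ n : ℕ, ((n * k * d : ℕ) : ZMod p) = -(n : ZMod p) := by
    intro n
    have h' := hkd
    push_cast at h' ⊢
    linear_combination (n : ZMod p) * h'
  have hdlt : i * d / p ≤ d - 1 := by
    have hlt : i * d / p < d := by
      rw [Nat.div_lt_iff_lt_mul (by omega : 0 < p)]
      have ha : i * d ≤ (p - 1) * d := Nat.mul_le_mul_right d (by omega)
      have hb : (p - 1) * d < p * d :=
        (Nat.mul_lt_mul_right (show 0 < d by omega)).mpr (show p - 1 < p by omega)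
      have hc : d * p = p * d := Nat.mul_comm d p
      linarith
    omega
  have hinj0 : Set.InjOn (fun a : ℕ => ((a : ℕ) : ZMod p))
      ↑(Finset.Icc 1 (i * d / p)) := by
    intro a ha b hb hab
    simp only [Finset.coe_Icc, Set.mem_Icc] at ha hb
    have hap : a < p := by omega
    have hbp : b < p := by omega
    have := congrArg ZMod.val hab
    rwa [ZMod.val_natCast_of_lt hap, ZMod.val_natCast_of_lt hbp] at this
  have hbind : (do let a ← Finset.Icc 1 (i * d / p); pure ((a : ℕ) : ZMod p))
      = Finset.image (fun a : ℕ => ((a : ℕ) : ZMod p)) (Finset.Icc 1 (i * d / p)) := by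
    rw [bind_pure_comp, Finset.fmap_def]
    congr!
  unfold tauP
  rw [hbind, Finset.filter_image,
    Finset.card_image_of_injOn
      (hinj0.mono (Finset.coe_subset.mpr (Finset.filter_subset _ _)))]
  refine congrArg Finset.card (Finset.ext fun n => ?_)
  simp only [Finset.mem_filter, Finset.mem_Icc]
  constructor
  · rintro ⟨⟨hn1, hn2⟩, m, hm0, hm1, hm2⟩
    have hnp : n * p ≤ i * d := (Nat.le_div_iff_mul_le (by omega)).mp hn2
    have hid : i * d ≤ (p - 1) * d := Nat.mul_le_mul_right d (by omega)
    have hnd : n ≤ d - 1 := by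
      by_contra hcon
      push_neg at hcon
      have h4 : d * p ≤ n * p := Nat.mul_le_mul_right p (by omega)
      have h5 : (p - 1) * d < p * d :=
        (Nat.mul_lt_mul_right (show 0 < d by omega)).mpr (show p - 1 < p by omega)
      have h45 : p * d = d * p := Nat.mul_comm p d
      linarith
    have hnp' : n * k * d + n ≤ i * d := by
      have he : n * p = n * k * d + n := by rw [hk]; ring
      linarith
    have hik : n * k + 1 ≤ i := by
      have h6 : n * k * d < i * d := by linarith
      exact lt_of_mul_lt_mul_right h6 (Nat.zero_le d)
    have hnk_lt : n * k < p := by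
      have ha : n * k ≤ (d - 1) * k := Nat.mul_le_mul_right k hnd
      have h7 : (d - 1) * k + k = d * k := by
        have hd1 : (d - 1) + 1 = d := by omega
        calc (d - 1) * k + k = ((d - 1) + 1) * k := by ring
          _ = d * k := by rw [hd1]
      have h7' : d * k = k * d := Nat.mul_comm d k
      linarith
    have hm_lt : m < p := by omega
    -- m ≡ n*k (mod p), both < p, so m = n*k
    have hcast : ((m : ℕ) : ZMod p) = ((n * k : ℕ) : ZMod p) := by
      have e1 : ((m : ZMod p)) * (d : ZMod p) = ((n * k : ℕ) : ZMod p) * (d : ZMod p) := by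
        have e2 := hm2
        have e3 := hF n
        push_cast at e2 e3 ⊢
        linear_combination -e2 - e3
      exact mul_right_cancel₀ hdne e1
    have heq := congrArg ZMod.val hcast
    rw [ZMod.val_natCast_of_lt hm_lt, ZMod.val_natCast_of_lt hnk_lt] at heq
    refine ⟨⟨hn1, hnd⟩, hik, ?_⟩
    rw [← heq]
    omega
  · rintro ⟨⟨hn1, hnd⟩, hi1, hi2⟩
    have hn2 : n ≤ i * d / p := by
      rw [Nat.le_div_iff_mul_le (by omega : 0 < p)]
      have he : n * p = n * k * d + n := by rw [hk]; ring
      have h8 : (n * k + 1) * d ≤ i * d := Nat.mul_le_mul_right d hi1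
      have h9 : n * k * d + d = (n * k + 1) * d := by ring
      have h10 : n ≤ d := by omega
      linarith
    refine ⟨⟨hn1, hn2⟩, n * k, ?_, ?_, ?_⟩
    · exact Nat.mul_pos (by omega) (by omega)
    · have : n * k + i ≤ p - 1 := by rw [Nat.add_comm]; exact hi2
      exact Nat.le_sub_of_add_le this
    · exact (hF n).symm

/-- If `p` is prime, `1 < d < p` and `p ≡ 1 (mod d)`, then
`τ_p(d) = ⌊(d-1)²/4⌋ · (p-1)/d`. -/
theorem tauPSum_of_one_mod (p d : ℕ) (hp : p.Prime) (h1 : 1 < d)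
    (h2 : d < p) (hmod : (p : ZMod d) = 1) :
    tauPSum p d = (d - 1) ^ 2 / 4 * ((p - 1) / d) := by
  classical
  haveI := Fact.mk hp
  have hpd : p % d = 1 := by
    have h0 : ((p : ℕ) : ZMod d) = ((1 : ℕ) : ZMod d) := by simpa using hmod
    have h1' := (ZMod.natCast_eq_natCast_iff p 1 d).mp h0
    have h1'' : p % d = 1 % d := h1'
    rwa [Nat.mod_eq_of_lt h1] at h1''
  set k := (p - 1) / d with hk_def
  obtain ⟨q, hq⟩ : ∃ q, p / d = q := ⟨_, rfl⟩
  have hdm := Nat.div_add_mod p d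
  rw [hpd, hq] at hdm
  have he : p - 1 = d * q := by rw [← hdm, Nat.add_sub_cancel]
  have hkq : k = q := by
    rw [hk_def, he, Nat.mul_div_cancel_left _ (by omega : 0 < d)]
  have hk : p = k * d + 1 := by rw [hkq, Nat.mul_comm]; exact hdm.symm
  have hk1 : 1 ≤ k := by
    rcases Nat.eq_zero_or_pos k with h | h
    · rw [h] at hk; simp at hk; omega
    · exact h
  unfold tauPSum
  rw [Finset.sum_congr rfl fun i hi =>
    tauP_eq_card p d k hp h1 h2 hk hk1 i (Finset.mem_range.mp hi)]
  simp only [Finset.card_filter]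
  rw [Finset.sum_comm]
  have hinner : ∀ n ∈ Finset.Icc 1 (d - 1),
      (∑ i ∈ Finset.range p, if n * k + 1 ≤ i ∧ i + n * k ≤ p - 1 then 1 else 0)
        = (d - 2 * n) * k := by
    intro n hn
    set A := n * k with hA
    rw [← Finset.card_filter]
    have hset : (Finset.range p).filter (fun i => A + 1 ≤ i ∧ i + A ≤ p - 1)
        = Finset.Icc (A + 1) (p - 1 - A) := by
      ext i
      simp only [Finset.mem_filter, Finset.mem_range, Finset.mem_Icc]
      constructor
      · rintro ⟨_, h3, h4⟩
        exact ⟨h3, Nat.le_sub_of_add_le h4⟩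
      · rintro ⟨h3, h4⟩
        have h5 : A + 1 ≤ p - 1 := le_trans h3 (le_trans h4 (Nat.sub_le (p - 1) A))
        have h6 : A ≤ p - 1 := le_trans (Nat.le_succ A) h5
        refine ⟨?_, h3, Nat.add_le_of_le_sub h6 h4⟩
        have : i ≤ p - 1 := le_trans h4 (Nat.sub_le (p - 1) A)
        omega
    rw [hset, Nat.card_Icc]
    have hs : (d - 2 * n) * k = d * k - (A + A) := by
      rw [Nat.sub_mul]
      congr 1
      rw [hA]; ring
    rw [hs, Nat.mul_comm d k, hk]
    generalize k * d = B
    omega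
  rw [Finset.sum_congr rfl hinner, ← Finset.sum_mul]
  congr 1
  -- ∑ n in Icc 1 (d-1), (d - 2*n) = (d-1)^2/4
  rw [← Finset.Ico_add_one_right_eq_Icc, Finset.sum_Ico_eq_sum_range]
  have h10 : (d - 1) + 1 - 1 = d - 1 := by omega
  rw [h10]
  have h11 : ∀ j, d - 2 * (1 + j) = (d - 1) - (2 * j + 1) := by intro j; omega
  rw [Finset.sum_congr rfl fun j _ => h11 j]
  exact tauP_S_eq (d - 1)
end

section
/- Let p be an odd prime, d a positive integer with p ∤ d, and for 1 ≤ j ≤ p−1 define L_j(d) = Σ_{i=j}^{p-1} ( ⌊id/p⌋ − ⌊id/p − (1−1/p)·(jd/p)⌋ ). Then L_j(d) ≥ (1 − 1/p)·( (d/p)·(p−j)·j − (p−j) ). -/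
/-- The lower-bound quantity
`L_j(d) = Σ_{i=j}^{p-1} (⌊id/p⌋ − ⌊id/p − (1−1/p)·jd/p⌋)` satisfies
`L_j(d) ≥ (1−1/p)·((d/p)·(p−j)·j − (p−j))`. -/
theorem Lj_lower_bound (p d j : ℕ) (hp : p.Prime) (hodd : Odd p) (hd : 0 < d)
    (hpd : ¬ p ∣ d) (hj1 : 1 ≤ j) (hj2 : j ≤ p - 1) :
    ((∑ i ∈ Finset.Icc j (p - 1),
        (⌊((i : ℚ) * d) / p⌋ -
          ⌊((i : ℚ) * d) / p - (1 - 1 / (p : ℚ)) * ((j : ℚ) * d / p)⌋) : ℤ) : ℚ)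
      ≥ (1 - 1 / (p : ℚ)) * (((d : ℚ) / p) * ((p : ℚ) - j) * j - ((p : ℚ) - j)) := by
  have hp1 : 1 < p := hp.one_lt
  have hpQ : (0 : ℚ) < (p : ℚ) := by exact_mod_cast hp.pos
  set c : ℚ := (1 - 1 / (p : ℚ)) * ((j : ℚ) * d / p) with hc
  -- per-term lower bound
  have key : ∀ i ∈ Finset.Icc j (p - 1),
      c - ((p : ℚ) - 1) / p ≤
        ((⌊((i : ℚ) * d) / p⌋ - ⌊((i : ℚ) * d) / p - c⌋ : ℤ) : ℚ) := by
    intro i _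
    set n : ℕ := (i * d) / p with hn
    have hmod : i * d % p ≤ p - 1 := Nat.le_sub_one_of_lt (Nat.mod_lt _ hp.pos)
    have hdm : p * n + i * d % p = i * d := Nat.div_add_mod (i * d) p
    have hx : ((i : ℚ) * d) = (p : ℚ) * n + (i * d % p : ℕ) := by
      have h := congrArg (fun k : ℕ => (k : ℚ)) hdm
      simp only [Nat.cast_add, Nat.cast_mul] at h
      linarith
    have hm : ((i * d % p : ℕ) : ℚ) ≤ (p : ℚ) - 1 := by
      have : ((i * d % p : ℕ) : ℚ) ≤ ((p - 1 : ℕ) : ℚ) := by exact_mod_cast hmod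
      calc ((i * d % p : ℕ) : ℚ) ≤ ((p - 1 : ℕ) : ℚ) := this
        _ = (p : ℚ) - 1 := by
            have : (1 : ℕ) ≤ p := hp.one_lt.le
            push_cast [this]; ring
    have h1 : ((n : ℤ) : ℚ) ≤ ((i : ℚ) * d) / p := by
      rw [le_div_iff₀ hpQ, hx]
      push_cast
      nlinarith [Nat.cast_nonneg (α := ℚ) (i * d % p)]
    have hfl : (n : ℤ) ≤ ⌊((i : ℚ) * d) / p⌋ := Int.le_floor.mpr h1
    have h1' : ((i : ℚ) * d) / p - ((p : ℚ) - 1) / p ≤ ((n : ℤ) : ℚ) := by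
      rw [div_sub_div_same, div_le_iff₀ hpQ, hx]
      push_cast
      nlinarith
    have h2 : ((⌊((i : ℚ) * d) / p - c⌋ : ℤ) : ℚ) ≤ ((i : ℚ) * d) / p - c :=
      Int.floor_le _
    have h3 : ((n : ℤ) : ℚ) ≤ ((⌊((i : ℚ) * d) / p⌋ : ℤ) : ℚ) := by exact_mod_cast hfl
    push_cast
    linarith
  have hsum := Finset.sum_le_sum key
  have hcard : (Finset.Icc j (p - 1)).card = p - j := by
    rw [Nat.card_Icc]
    omega
  have hconst : ∑ _i ∈ Finset.Icc j (p - 1), (c - ((p : ℚ) - 1) / p)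
      = ((p - j : ℕ) : ℚ) * (c - ((p : ℚ) - 1) / p) := by
    rw [Finset.sum_const, hcard, nsmul_eq_mul]
  have hpj : ((p - j : ℕ) : ℚ) = (p : ℚ) - j := by
    have : j ≤ p := by omega
    push_cast [this]; ring
  have hcast : ((∑ i ∈ Finset.Icc j (p - 1),
        (⌊((i : ℚ) * d) / p⌋ - ⌊((i : ℚ) * d) / p - c⌋) : ℤ) : ℚ)
      = ∑ i ∈ Finset.Icc j (p - 1),
        ((⌊((i : ℚ) * d) / p⌋ - ⌊((i : ℚ) * d) / p - c⌋ : ℤ) : ℚ) := by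
    push_cast; ring
  rw [hcast] at *
  have hfinal : (1 - 1 / (p : ℚ)) * (((d : ℚ) / p) * ((p : ℚ) - j) * j - ((p : ℚ) - j))
      = ((p : ℚ) - j) * (c - ((p : ℚ) - 1) / p) := by
    rw [hc]
    field_simp
  rw [ge_iff_le, hfinal, ← hpj, ← hconst]
  exact hsum
end

section
/- Let p be an odd prime, S a finite set, and (d_Q)_{Q∈S} positive integers with p ∤ d_Q. Then Σ_{Q∈S} Σ_{i=⌈(p+1)/2⌉}^{p-1} ( ⌊id_Q/p⌋ − ⌊id_Q/p − (1−1/p)·((p+1)/2)·d_Q/p⌋ ) ≥ (1−1/p)²·( Σ_{Q∈S} (p+1)/4 · d_Q − |S|·p/2 ). -/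
/-- The explicit lower bound of Corollary 1.5 (with `j = (p+1)/2`):
`Σ_{Q∈S} Σ_{i=(p+1)/2}^{p-1} (⌊i d_Q/p⌋ − ⌊i d_Q/p − (1−1/p)·((p+1)/2)·d_Q/p⌋)
  ≥ (1−1/p)²·(Σ_{Q∈S} ((p+1)/4)·d_Q − |S|·p/2)`. -/
theorem explicit_lower_bound {α : Type*} (p : ℕ) (hp : p.Prime) (hodd : Odd p)
    (S : Finset α) (d : α → ℕ) (hd : ∀ Q ∈ S, 0 < d Q ∧ ¬ p ∣ d Q) :
    ((∑ Q ∈ S, ∑ i ∈ Finset.Icc ((p + 1) / 2) (p - 1),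
        (⌊((i : ℚ) * d Q) / p⌋ -
          ⌊((i : ℚ) * d Q) / p -
            (1 - 1 / (p : ℚ)) * (((p : ℚ) + 1) / 2) * (d Q : ℚ) / p⌋) : ℤ) : ℚ)
      ≥ (1 - 1 / (p : ℚ)) ^ 2 *
          ((∑ Q ∈ S, ((p : ℚ) + 1) / 4 * (d Q : ℚ)) - (S.card : ℚ) * p / 2) := by
  obtain ⟨k, hk⟩ := hodd
  have hp2 : 2 ≤ p := hp.two_le
  have hk1 : 1 ≤ k := by omega
  have hp0 : (0 : ℚ) < p := by exact_mod_cast hp.pos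
  have hpq : (p : ℚ) ≠ 0 := ne_of_gt hp0
  have hpk : (p : ℚ) = 2 * k + 1 := by exact_mod_cast hk
  have hcard : (Finset.Icc ((p + 1) / 2) (p - 1)).card = k := by
    rw [Nat.card_Icc]; omega
  have key : ∀ Q ∈ S,
      (1 - 1 / (p : ℚ)) ^ 2 * (((p : ℚ) + 1) / 4 * (d Q : ℚ) - (p : ℚ) / 2) ≤
      ((∑ i ∈ Finset.Icc ((p + 1) / 2) (p - 1),
        (⌊((i : ℚ) * d Q) / p⌋ -
          ⌊((i : ℚ) * d Q) / p -
            (1 - 1 / (p : ℚ)) * (((p : ℚ) + 1) / 2) * (d Q : ℚ) / p⌋) : ℤ) : ℚ) := by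
    intro Q _
    push_cast
    have hterm : ∀ i ∈ Finset.Icc ((p + 1) / 2) (p - 1),
        (1 - 1 / (p : ℚ)) * (((p : ℚ) + 1) / 2) * (d Q : ℚ) / p - ((p : ℚ) - 1) / p ≤
        (⌊((i : ℚ) * d Q) / p⌋ : ℚ) -
          (⌊((i : ℚ) * d Q) / p -
            (1 - 1 / (p : ℚ)) * (((p : ℚ) + 1) / 2) * (d Q : ℚ) / p⌋ : ℚ) := by
      intro i _
      have h1 : (⌊((i : ℚ) * d Q) / p -
            (1 - 1 / (p : ℚ)) * (((p : ℚ) + 1) / 2) * (d Q : ℚ) / p⌋ : ℚ) ≤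
          ((i : ℚ) * d Q) / p -
            (1 - 1 / (p : ℚ)) * (((p : ℚ) + 1) / 2) * (d Q : ℚ) / p := Int.floor_le _
      have hfl : ⌊((i : ℚ) * d Q) / p⌋ = ((i * d Q : ℕ) : ℤ) / (p : ℤ) := by
        rw [show ((i : ℚ) * d Q) = (((i * d Q : ℕ) : ℤ) : ℚ) by push_cast; ring]
        exact Rat.floor_intCast_div_natCast _ _
      have hz : ((i * d Q : ℕ) : ℤ) - (p : ℤ) + 1 ≤
          (p : ℤ) * (((i * d Q : ℕ) : ℤ) / (p : ℤ)) := by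
        have h := Int.mul_ediv_add_emod ((i * d Q : ℕ) : ℤ) (p : ℤ)
        have h' : ((i * d Q : ℕ) : ℤ) % (p : ℤ) < (p : ℤ) :=
          Int.emod_lt_of_pos _ (by exact_mod_cast hp.pos)
        omega
      have hq : (i : ℚ) * d Q - (p : ℚ) + 1 ≤
          (p : ℚ) * ((((i * d Q : ℕ) : ℤ) / (p : ℤ) : ℤ) : ℚ) := by
        exact_mod_cast hz
      have h2 : ((i : ℚ) * d Q) / p - ((p : ℚ) - 1) / p ≤ (⌊((i : ℚ) * d Q) / p⌋ : ℚ) := by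
        rw [hfl, div_sub_div_same, div_le_iff₀ hp0]
        push_cast at hq ⊢
        linarith
      linarith
    have hsum := Finset.sum_le_sum hterm
    rw [Finset.sum_const, hcard, nsmul_eq_mul] at hsum
    refine le_trans (le_of_eq ?_) hsum
    rw [hpk]
    have hk0 : (0 : ℚ) < 2 * (k : ℚ) + 1 := by positivity
    field_simp
    ring
  have hRHS : ∑ Q ∈ S, ((1 - 1 / (p : ℚ)) ^ 2 * (((p : ℚ) + 1) / 4 * (d Q : ℚ) - (p : ℚ) / 2))
      = (1 - 1 / (p : ℚ)) ^ 2 *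
          ((∑ Q ∈ S, ((p : ℚ) + 1) / 4 * (d Q : ℚ)) - (S.card : ℚ) * p / 2) := by
    rw [← Finset.mul_sum, Finset.sum_sub_distrib, Finset.sum_const, nsmul_eq_mul]
    ring
  rw [ge_iff_le, Int.cast_sum, ← hRHS]
  exact Finset.sum_le_sum key
end
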